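/- Let F, G ⊆ 2^{[n]} be families such that both F and G are intersecting, and they are cross-Sperner: there is no F ∈ F and G ∈ G with F ⊆ G or G ⊆ F. Then |F| + |G| ≤ 2^{n−1}. -/

import Mathlib

open Finset in
open scoped Classical FinsetFamily in
theorem stmt_10 (n : ℕ) (F G : Finset (Finset (Fin n)))
    (hFint : ∀ A ∈ F, ∀ B ∈ F, (A ∩ B).Nonempty)
    (hGint : ∀ A ∈ G, ∀ B ∈ G, (A ∩ B).Nonempty)
    (hcross : ∀ A ∈ F, ∀ B ∈ G, ¬ A ⊆ B ∧ ¬ B ⊆ A) :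
    F.card + G.card ≤ 2 ^ (n - 1) := by
  -- up-set, down-set of F, and the complement-image of the up-set
  set U : Finset (Finset (Fin n)) := univ.filter (fun S => ∃ A ∈ F, A ⊆ S) with hU
  set D : Finset (Finset (Fin n)) := univ.filter (fun S => ∃ A ∈ F, S ⊆ A) with hD
  set Uc : Finset (Finset (Fin n)) := univ.filter (fun S => ∃ A ∈ F, A ⊆ Sᶜ) with hUc
  set W : Finset (Finset (Fin n)) := D ∩ Uc with hW
  have hcard_univ : (univ : Finset (Finset (Fin n))).card = 2 ^ n := by
    simp [Fintype.card_finset]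
  -- Daykin: |F| * 2^n ≤ |D| * |U|
  have hsups : F ⊻ (univ : Finset (Finset (Fin n))) ⊆ U := by
    intro S hS
    rw [mem_sups] at hS
    obtain ⟨a, ha, b, _, rfl⟩ := hS
    simp only [hU, mem_filter, mem_univ, true_and]
    exact ⟨a, ha, le_sup_left⟩
  have hinfs : F ⊼ (univ : Finset (Finset (Fin n))) ⊆ D := by
    intro S hS
    rw [mem_infs] at hS
    obtain ⟨a, ha, b, _, rfl⟩ := hS
    simp only [hD, mem_filter, mem_univ, true_and]
    exact ⟨a, ha, inf_le_left⟩
  have hdaykin : F.card * 2 ^ n ≤ D.card * U.card := by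
    calc F.card * 2 ^ n = F.card * (univ : Finset (Finset (Fin n))).card := by rw [hcard_univ]
    _ ≤ (F ⊼ (univ : Finset (Finset (Fin n)))).card * (F ⊻ (univ : Finset (Finset (Fin n)))).card :=
        Finset.le_card_infs_mul_card_sups _ _
    _ ≤ D.card * U.card :=
        Nat.mul_le_mul (card_le_card hinfs) (card_le_card hsups)
  -- |Uc| = |U|
  have hUcim : Uc = U.image compl := by
    ext S
    simp only [hUc, hU, mem_image, mem_filter, mem_univ, true_and]
    constructor
    · intro h; exact ⟨Sᶜ, h, compl_compl S⟩
    · rintro ⟨T, hT, rfl⟩; simpa using hT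
  have hUcard : Uc.card = U.card := by
    rw [hUcim]; exact card_image_of_injective _ compl_injective
  -- Harris-Kleitman: |D| * |Uc| ≤ 2^n * |W|
  have hDlow : IsLowerSet (D : Set (Finset (Fin n))) := by
    intro S T hTS hS
    simp only [hD, coe_filter, Set.mem_setOf_eq, mem_univ, true_and] at *
    obtain ⟨A, hA, hSA⟩ := hS
    exact ⟨A, hA, le_trans hTS hSA⟩
  have hUclow : IsLowerSet (Uc : Set (Finset (Fin n))) := by
    intro S T hTS hS
    simp only [hUc, coe_filter, Set.mem_setOf_eq, mem_univ, true_and] at *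
    obtain ⟨A, hA, hSA⟩ := hS
    exact ⟨A, hA, le_trans hSA (compl_le_compl hTS)⟩
  have hHK : D.card * Uc.card ≤ 2 ^ n * W.card := by
    have := hDlow.le_card_inter_finset hUclow
    simpa [Fintype.card_fin] using this
  -- hence |F| ≤ |W|
  have hFW : F.card ≤ W.card := by
    have h1 : F.card * 2 ^ n ≤ W.card * 2 ^ n := by
      calc F.card * 2 ^ n ≤ D.card * U.card := hdaykin
      _ = D.card * Uc.card := by rw [hUcard]
      _ ≤ 2 ^ n * W.card := hHK
      _ = W.card * 2 ^ n := Nat.mul_comm _ _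
    exact Nat.le_of_mul_le_mul_right h1 (Nat.pow_pos (by norm_num))
  -- membership characterizations
  have hWmem : ∀ S, S ∈ W ↔ (∃ A ∈ F, S ⊆ A) ∧ (∃ A ∈ F, A ⊆ Sᶜ) := by
    intro S
    simp [hW, hD, hUc, mem_inter, mem_filter]
  -- X = W ∪ G, and X is disjoint from its complement-image
  set X : Finset (Finset (Fin n)) := W ∪ G with hX
  have hWG : Disjoint W G := by
    rw [Finset.disjoint_left]
    intro S hSW hSG
    obtain ⟨⟨A, hA, hSA⟩, _⟩ := (hWmem S).1 hSW
    exact (hcross A hA S hSG).2 hSA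
  have hXcard : X.card = W.card + G.card := card_union_of_disjoint hWG
  have hnotboth : ∀ S : Finset (Fin n), S ∈ X → Sᶜ ∈ X → False := by
    intro S hS hSc
    rw [hX, mem_union] at hS hSc
    rcases hS with hSW | hSG <;> rcases hSc with hScW | hScG
    · -- S ∈ W, Sᶜ ∈ W : two disjoint members of F
      obtain ⟨_, ⟨A, hA, hASc⟩⟩ := (hWmem S).1 hSW
      obtain ⟨_, ⟨B, hB, hBS⟩⟩ := (hWmem Sᶜ).1 hScW
      rw [compl_compl] at hBS
      obtain ⟨x, hx⟩ := hFint A hA B hB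
      rw [mem_inter] at hx
      exact (Finset.mem_compl.1 (hASc hx.1)) (hBS hx.2)
    · -- S ∈ W, Sᶜ ∈ G : A ⊆ Sᶜ ∈ G with A ∈ F
      obtain ⟨_, ⟨A, hA, hASc⟩⟩ := (hWmem S).1 hSW
      exact (hcross A hA Sᶜ hScG).1 hASc
    ·
      obtain ⟨_, ⟨A, hA, hAS⟩⟩ := (hWmem Sᶜ).1 hScW
      rw [compl_compl] at hAS
      exact (hcross A hA S hSG).1 hAS
    · -- S ∈ G, Sᶜ ∈ G : contradiction with G intersecting
      obtain ⟨x, hx⟩ := hGint S hSG Sᶜ hScG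
      rw [mem_inter] at hx
      exact (Finset.mem_compl.1 hx.2) hx.1
  have hXdisj : Disjoint X (X.image compl) := by
    rw [Finset.disjoint_left]
    intro S hS hSim
    rw [mem_image] at hSim
    obtain ⟨T, hT, rfl⟩ := hSim
    exact hnotboth T hT hS
  have h2X : 2 * X.card ≤ 2 ^ n := by
    have : (X ∪ X.image compl).card ≤ 2 ^ n := by
      rw [← hcard_univ]; exact card_le_card (subset_univ _)
    rw [card_union_of_disjoint hXdisj, card_image_of_injective _ compl_injective] at this
    omega
  have hsum : 2 * (F.card + G.card) ≤ 2 ^ n := by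
    have : F.card + G.card ≤ X.card := by
      rw [hXcard]; exact Nat.add_le_add_right hFW _
    omega
  rcases n with _ | m
  · norm_num at hsum ⊢; omega
  · have : 2 ^ (m + 1) = 2 * 2 ^ m := by ring
    simp only [Nat.add_sub_cancel]
    omega
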